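/- Let k be a commutative ring with 1/2, A a commutative k-algebra with involution θ, and let 𝐀 ⊆ A[√t^{±1}] be the k[t]-subalgebra generated by A^θ and (1/√t)·A^{-θ} (where t = (√t)²). Then the base change 𝐀 ⊗_{k[t]} k[t^{±1}] is canonically isomorphic as a k[t^{±1}]-algebra to A_t := A^θ[t^{±1}] ⊕ (1/√t)A^{-θ} ⊗_k k[t^{±1}] ⊆ A[√t^{±1}]. -/

import Mathlib

open LaurentPolynomial

/-- The contraction algebra `𝐀`: the `k[t]`-subalgebra of `A[√t^{±1}]`
(realized as the `k`-subalgebra containing `t = (√t)²`) generated by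
`A^θ` and `(1/√t)·A^{-θ}`. -/
noncomputable def contraction (k A : Type*) [CommRing k] [CommRing A] [Algebra k A]
    (θ : A →ₐ[k] A) : Subalgebra k (LaurentPolynomial A) :=
  Algebra.adjoin k (insert (T 2)
    ({f | ∃ a, θ a = a ∧ f = C a} ∪ {f | ∃ a, θ a = -a ∧ f = C a * T (-1)}))

/-- `A_t`: the `k[t^{±1}]`-subalgebra of `A[√t^{±1}]` generated by `A^θ` and
`(1/√t)·A^{-θ}`, i.e. `A^θ[t^{±1}] ⊕ (1/√t)A^{-θ} ⊗ k[t^{±1}]`. -/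
noncomputable def contractionT (k A : Type*) [CommRing k] [CommRing A] [Algebra k A]
    (θ : A →ₐ[k] A) : Subalgebra k (LaurentPolynomial A) :=
  Algebra.adjoin k (insert (T 2) (insert (T (-2))
    ({f | ∃ a, θ a = a ∧ f = C a} ∪ {f | ∃ a, θ a = -a ∧ f = C a * T (-1)})))

theorem t_mem_contraction {k A : Type*} [CommRing k] [CommRing A] [Algebra k A]
    (θ : A →ₐ[k] A) : (T 2 : LaurentPolynomial A) ∈ contraction k A θ :=
  Algebra.subset_adjoin (Set.mem_insert _ _)

theorem contraction_le_contractionT {k A : Type*} [CommRing k] [CommRing A] [Algebra k A]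
    (θ : A →ₐ[k] A) : contraction k A θ ≤ contractionT k A θ :=
  Algebra.adjoin_mono (Set.insert_subset_insert (Set.subset_insert _ _))

/-!
STATEMENT 1: `𝐀 ⊗_{k[t]} k[t^{±1}] ≅ A_t` canonically as `k[t^{±1}]`-algebras.
Since `k[t] → k[t^{±1}]` is the localization at `t`, this says exactly that
`A_t`, viewed as a `𝐀`-algebra via the inclusion `𝐀 ⊆ A_t`, is the
localization of `𝐀` away from the element `t ∈ 𝐀`. -/
theorem key_mul_pow {k A : Type*} [CommRing k] [CommRing A] [Algebra k A]
    (θ : A →ₐ[k] A) {z : LaurentPolynomial A}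
    (hz : z ∈ contractionT k A θ) :
    ∃ n : ℕ, z * (T 2) ^ n ∈ contraction k A θ := by
  induction hz using Algebra.adjoin_induction with
  | mem x hx =>
    rcases hx with rfl | rfl | hx
    · exact ⟨0, by simpa using t_mem_contraction θ⟩
    · refine ⟨1, ?_⟩
      have : T (-2) * (T 2 : LaurentPolynomial A) ^ 1 = 1 := by
        rw [pow_one, ← T_add]; norm_num
      rw [this]; exact Subalgebra.one_mem _
    · exact ⟨0, by rw [pow_zero, mul_one]; exact Algebra.subset_adjoin (Set.mem_insert_of_mem _ hx)⟩
  | algebraMap r => exact ⟨0, by rw [pow_zero, mul_one]; exact Subalgebra.algebraMap_mem _ r⟩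
  | add x y hx hy ihx ihy =>
    obtain ⟨n, hn⟩ := ihx; obtain ⟨m, hm⟩ := ihy
    refine ⟨n + m, ?_⟩
    have : (x + y) * (T 2 : LaurentPolynomial A) ^ (n + m)
        = (x * T 2 ^ n) * T 2 ^ m + (y * T 2 ^ m) * T 2 ^ n := by ring
    rw [this]
    exact Subalgebra.add_mem _
      (Subalgebra.mul_mem _ hn (Subalgebra.pow_mem _ (t_mem_contraction θ) _))
      (Subalgebra.mul_mem _ hm (Subalgebra.pow_mem _ (t_mem_contraction θ) _))
  | mul x y hx hy ihx ihy =>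
    obtain ⟨n, hn⟩ := ihx; obtain ⟨m, hm⟩ := ihy
    refine ⟨n + m, ?_⟩
    have : (x * y) * (T 2 : LaurentPolynomial A) ^ (n + m)
        = (x * T 2 ^ n) * (y * T 2 ^ m) := by ring
    rw [this]
    exact Subalgebra.mul_mem _ hn hm


theorem aux_isLocalization {k R : Type*} [CommRing k] [CommRing R] [Algebra k R]
    {S S' : Subalgebra k R} (h : S ≤ S') {t : R} (ht : t ∈ S)
    (u : R) (hu : u ∈ S') (htu : t * u = 1)
    (hsurj : ∀ z ∈ S', ∃ n : ℕ, z * t ^ n ∈ S) :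
    letI : Algebra ↥S ↥S' := (Subalgebra.inclusion h).toRingHom.toAlgebra
    IsLocalization.Away (⟨t, ht⟩ : ↥S) ↥S' := by
  letI : Algebra ↥S ↥S' := (Subalgebra.inclusion h).toRingHom.toAlgebra
  constructor
  constructor
  · rintro ⟨_, n, rfl⟩
    rw [map_pow]
    refine IsUnit.pow n (IsUnit.of_mul_eq_one (a := _) ⟨u, hu⟩ ?_)
    exact Subtype.ext htu
  · rintro ⟨z, hz⟩
    obtain ⟨n, hn⟩ := hsurj z hz
    refine ⟨⟨⟨z * t ^ n, hn⟩, ⟨_, n, rfl⟩⟩, ?_⟩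
    apply Subtype.ext
    show z * ((⟨t, ht⟩ : ↥S) ^ n : ↥S).1 = z * t ^ n
    rw [SubmonoidClass.coe_pow]
  · intro x y hxy
    have h' : ((algebraMap ↥S ↥S' x : ↥S') : R) = ((algebraMap ↥S ↥S' y : ↥S') : R) :=
      congrArg Subtype.val hxy
    exact ⟨1, by rw [show x = y from Subtype.ext h']⟩

theorem contraction_baseChange_laurent
    (k A : Type*) [CommRing k] [CommRing A] [Algebra k A] [Invertible (2 : k)]
    (θ : A →ₐ[k] A) (hθ : θ.comp θ = AlgHom.id k A) :
    letI : Algebra ↥(contraction k A θ) ↥(contractionT k A θ) :=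
      (Subalgebra.inclusion (contraction_le_contractionT θ)).toRingHom.toAlgebra
    IsLocalization.Away
      (⟨T 2, t_mem_contraction θ⟩ : ↥(contraction k A θ))
      ↥(contractionT k A θ) :=
  aux_isLocalization (contraction_le_contractionT θ) (t_mem_contraction θ)
    (T (-2)) (Algebra.subset_adjoin (Set.mem_insert_of_mem _ (Set.mem_insert _ _)))
    (by rw [← T_add]; norm_num)
    (fun z hz => key_mul_pow θ hz)
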